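/- Let P and Q be orthogonal projections on a complex Hilbert space H. Then Ran Q is the graph subspace G(Ran P, X) of some closed densely defined operator X from Ran P to (Ran P)^perp if and only if M_10(P,Q) = {0} and M_01(P,Q) = {0}. -/

import Mathlib

open scoped InnerProductSpace

variable {H : Type*} [NormedAddCommGroup H] [InnerProductSpace ℂ H] [CompleteSpace H]

/-- `IsGraphSubspaceOf N G` expresses that the closed subspace `G ⊆ H` is the graph subspace
`G(N, X) = {x + X x : x ∈ Dom X}` of some closed densely defined operator `X` from the
subspace `N` to its orthogonal complement `Nᗮ`.  The operator is modelled as a partially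
defined linear map `X : H →ₗ.[ℂ] H` whose domain is a dense subspace of `N` and whose values
lie in `Nᗮ`; closedness of `X` is the closedness of its graph. -/
def IsGraphSubspaceOf (N G : Submodule ℂ H) : Prop :=
  ∃ X : H →ₗ.[ℂ] H,
    X.domain ≤ N ∧
    (∀ x : X.domain, X x ∈ Nᗮ) ∧
    (N : Set H) ⊆ closure (X.domain : Set H) ∧
    IsClosed (X.graph : Set (H × H)) ∧
    (G : Set H) = {u : H | ∃ x : X.domain, u = (x : H) + X x}

/-- Let `P` and `Q` be orthogonal projections on a complex Hilbert space `H`.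
Then `Ran Q` is the graph subspace `G(Ran P, X)` of some closed densely defined operator `X`
from `Ran P` to `(Ran P)ᗮ` if and only if `M₁₀(P,Q) = {0}` and `M₀₁(P,Q) = {0}`. -/
theorem isGraphSubspaceOf_range_iff_M10_M01_trivial
    (P Q : H →L[ℂ] H)
    (hP : IsIdempotentElem P) (hPsa : IsSelfAdjoint P)
    (hQ : IsIdempotentElem Q) (hQsa : IsSelfAdjoint Q) :
    IsGraphSubspaceOf (LinearMap.range (P : H →ₗ[ℂ] H)) (LinearMap.range (Q : H →ₗ[ℂ] H)) ↔
      ({f : H | P f = f ∧ Q f = 0} = {0} ∧ {f : H | P f = 0 ∧ Q f = f} = {0}) := by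
  set N : Submodule ℂ H := LinearMap.range (P : H →ₗ[ℂ] H) with hNdef
  set G : Submodule ℂ H := LinearMap.range (Q : H →ₗ[ℂ] H) with hGdef
  have hPsym : ∀ x y : H, ⟪P x, y⟫_ℂ = ⟪x, P y⟫_ℂ := fun x y => hPsa.isSymmetric x y
  have hQsym : ∀ x y : H, ⟪Q x, y⟫_ℂ = ⟪x, Q y⟫_ℂ := fun x y => hQsa.isSymmetric x y
  have hPP : ∀ g : H, P (P g) = P g := by
    intro g
    have := congrArg (fun T : H →L[ℂ] H => T g) hP
    simpa [ContinuousLinearMap.mul_apply] using this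
  have hQQ : ∀ g : H, Q (Q g) = Q g := by
    intro g
    have := congrArg (fun T : H →L[ℂ] H => T g) hQ
    simpa [ContinuousLinearMap.mul_apply] using this
  have hPfix : ∀ f : H, f ∈ N → P f = f := by
    rintro _ ⟨g, rfl⟩; exact hPP g
  have hQfix : ∀ f : H, f ∈ G → Q f = f := by
    rintro _ ⟨g, rfl⟩; exact hQQ g
  have hkerP : ∀ f : H, P f = 0 ↔ f ∈ Nᗮ := by
    intro f
    rw [Submodule.mem_orthogonal]
    constructor
    · rintro h _ ⟨g, rfl⟩
      rw [ContinuousLinearMap.coe_coe, hPsym g f, h, inner_zero_right]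
    · intro h
      have h1 : ⟪P f, P f⟫_ℂ = 0 := by
        have h2 := hPsym (P f) f
        rw [hPP f] at h2
        rw [← h2]
        exact h (P f) ⟨f, rfl⟩
      exact inner_self_eq_zero.mp h1
  have hkerQ : ∀ f : H, Q f = 0 ↔ f ∈ Gᗮ := by
    intro f
    rw [Submodule.mem_orthogonal]
    constructor
    · rintro h _ ⟨g, rfl⟩
      rw [ContinuousLinearMap.coe_coe, hQsym g f, h, inner_zero_right]
    · intro h
      have h1 : ⟪Q f, Q f⟫_ℂ = 0 := by
        have h2 := hQsym (Q f) f
        rw [hQQ f] at h2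
        rw [← h2]
        exact h (Q f) ⟨f, rfl⟩
      exact inner_self_eq_zero.mp h1
  constructor
  · rintro ⟨X, hdomN, hval, hdense, _hclosed, hset⟩
    constructor
    · -- M₁₀ = {0}
      ext f
      simp only [Set.mem_setOf_eq, Set.mem_singleton_iff]
      constructor
      · rintro ⟨hPf, hQf⟩
        have hfN : f ∈ N := ⟨f, hPf⟩
        -- f is orthogonal to every element of G
        have hfG : ∀ g ∈ G, ⟪f, g⟫_ℂ = 0 := by
          rintro _ ⟨g, rfl⟩
          rw [ContinuousLinearMap.coe_coe, ← hQsym f g, hQf, inner_zero_left]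
        -- hence orthogonal to every x in the domain of X
        have hdom0 : ∀ x : X.domain, ⟪f, (x : H)⟫_ℂ = 0 := by
          intro x
          have hmem : ((x : H) + X x) ∈ (G : Set H) := by
            rw [hset]; exact ⟨x, rfl⟩
          have h1 : ⟪f, (x : H) + X x⟫_ℂ = 0 := hfG _ hmem
          have h2 : ⟪f, X x⟫_ℂ = 0 :=
            (Submodule.mem_orthogonal N (X x)).mp (hval x) f hfN
          rw [inner_add_right, h2, add_zero] at h1
          exact h1
        -- f lies in the closure of the domain, so ⟪f, f⟫ = 0
        have hC : IsClosed {y : H | ⟪f, y⟫_ℂ = 0} :=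
          isClosed_eq (Continuous.inner continuous_const continuous_id) continuous_const
        have hsub : closure (X.domain : Set H) ⊆ {y : H | ⟪f, y⟫_ℂ = 0} := by
          apply closure_minimal _ hC
          intro y hy
          exact hdom0 ⟨y, hy⟩
        have : ⟪f, f⟫_ℂ = 0 := hsub (hdense hfN)
        exact inner_self_eq_zero.mp this
      · rintro rfl
        simp
    · -- M₀₁ = {0}
      ext f
      simp only [Set.mem_setOf_eq, Set.mem_singleton_iff]
      constructor
      · rintro ⟨hPf, hQf⟩
        have hfG : f ∈ (G : Set H) := ⟨f, hQf⟩
        rw [hset] at hfG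
        obtain ⟨x, hx⟩ := hfG
        have hx0 : (x : H) = 0 := by
          have h1 : P ((x : H) + X x) = (x : H) := by
            rw [map_add, hPfix _ (hdomN x.2), (hkerP _).mpr (hval x), add_zero]
          rw [← hx, hPf] at h1
          exact h1.symm
        have hxz : x = 0 := Subtype.ext hx0
        rw [hx, hxz, X.map_zero]
        simp
      · rintro rfl
        simp
  · rintro ⟨h10, h01⟩
    have h10' : ∀ f : H, P f = f → Q f = 0 → f = 0 := by
      intro f h1 h2
      have : f ∈ ({f : H | P f = f ∧ Q f = 0} : Set H) := ⟨h1, h2⟩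
      rw [h10] at this
      exact this
    have h01' : ∀ f : H, P f = 0 → Q f = f → f = 0 := by
      intro f h1 h2
      have : f ∈ ({f : H | P f = 0 ∧ Q f = f} : Set H) := ⟨h1, h2⟩
      rw [h01] at this
      exact this
    -- the operator:  restrict P to G, corestrict to its range
    set S : G →ₗ[ℂ] H := P.toLinearMap.comp G.subtype with hSdef
    have hSapp : ∀ g : G, S g = P (g : H) := fun g => rfl
    set D : Submodule ℂ H := LinearMap.range S with hDdef
    have hbij : Function.Bijective S.rangeRestrict := by
      constructor
      · rw [← LinearMap.ker_eq_bot, LinearMap.ker_rangeRestrict]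
        rw [LinearMap.ker_eq_bot']
        intro g hg
        have hPg : P (g : H) = 0 := hg
        have hQg : Q (g : H) = (g : H) := hQfix _ g.2
        exact Subtype.ext (h01' _ hPg hQg)
      · exact LinearMap.surjective_rangeRestrict S
    set e : G ≃ₗ[ℂ] D := LinearEquiv.ofBijective S.rangeRestrict hbij with hedef
    have heapp : ∀ g : G, ((e g : D) : H) = P (g : H) := fun g => rfl
    set F : D →ₗ[ℂ] H :=
      (G.subtype - P.toLinearMap.comp G.subtype).comp e.symm.toLinearMap with hFdef
    have hFapp : ∀ x : D, F x = ((e.symm x : G) : H) - P ((e.symm x : G) : H) := fun x => rfl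
    have hkey : ∀ x : D, P ((e.symm x : G) : H) = (x : H) := by
      intro x
      have h2 : ((e (e.symm x) : D) : H) = (x : H) :=
        congrArg (fun y : D => (y : H)) (e.apply_symm_apply x)
      rw [heapp] at h2
      exact h2
    set X : H →ₗ.[ℂ] H := ⟨D, F⟩ with hXdef
    have hXdom : X.domain = D := rfl
    have hXapp : ∀ x : D, X x = F x := fun x => rfl
    have hDN : D ≤ N := by
      rintro _ ⟨g, rfl⟩
      exact ⟨(g : H), rfl⟩
    -- G is closed
    have hGclosed : IsClosed (G : Set H) := by
      have : (G : Set H) = {f : H | Q f = f} := by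
        ext f
        exact ⟨fun hf => hQfix f hf, fun hf => ⟨f, hf⟩⟩
      rw [this]
      exact isClosed_eq Q.continuous continuous_id
    refine ⟨X, hDN, ?_, ?_, ?_, ?_⟩
    · -- values in Nᗮ
      intro x
      rw [Submodule.mem_orthogonal]
      rintro _ ⟨w, rfl⟩
      rw [hXapp, hFapp]
      rw [ContinuousLinearMap.coe_coe, hPsym w _, map_sub, hPP, sub_self, inner_zero_right]
    · -- density
      intro f hf
      have hfN : f ∈ N := hf
      have : f ∈ Dᗮᗮ := by
        rw [Submodule.mem_orthogonal]
        intro v hv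
        have hPv : P v = 0 := by
          apply h10' (P v) (hPP v)
          rw [hkerQ]
          rw [Submodule.mem_orthogonal]
          rintro _ ⟨w, rfl⟩
          have hPw : P (Q w) ∈ D := ⟨⟨Q w, ⟨w, rfl⟩⟩, rfl⟩
          rw [ContinuousLinearMap.coe_coe, ← hPsym (Q w) v]
          exact (Submodule.mem_orthogonal D v).mp hv _ hPw
        have h1 := hPsym v f
        rw [hPv, hPfix f hfN, inner_zero_left] at h1
        exact h1.symm
      rw [Submodule.orthogonal_orthogonal_eq_closure] at this
      rw [← Submodule.topologicalClosure_coe]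
      exact this
    · -- graph closed
      have hgr : (X.graph : Set (H × H)) =
          {p : H × H | p.1 + p.2 ∈ G ∧ P (p.1 + p.2) = p.1} := by
        ext ⟨a, b⟩
        simp only [SetLike.mem_coe, LinearPMap.mem_graph_iff, Set.mem_setOf_eq]
        constructor
        · rintro ⟨x, hxa, hxb⟩
          rw [hXapp, hFapp] at hxb
          set g : H := ((e.symm x : G) : H) with hg
          have hPg : P g = a := by rw [hkey x, hxa]
          have hab : a + b = g := by
            rw [← hxb, ← hPg]; abel
          constructor
          · rw [hab]; exact (e.symm x : G).2
          · rw [hab, hPg]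
        · rintro ⟨hab1, hab2⟩
          set g : G := ⟨a + b, hab1⟩ with hg
          refine ⟨e g, ?_, ?_⟩
          · rw [heapp]
            exact hab2
          · rw [hXapp, hFapp, e.symm_apply_apply]
            show ((g : H) - P (g : H)) = b
            show ((a + b) - P (a + b)) = b
            rw [hab2]; abel
      rw [hgr]
      exact IsClosed.inter
        (hGclosed.preimage (continuous_fst.add continuous_snd))
        (isClosed_eq (P.continuous.comp (continuous_fst.add continuous_snd)) continuous_fst)
    · -- set equality
      ext u
      simp only [SetLike.mem_coe, Set.mem_setOf_eq]
      constructor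
      · intro hu
        set g : G := ⟨u, hu⟩ with hg
        refine ⟨e g, ?_⟩
        rw [hXapp, hFapp, e.symm_apply_apply, heapp]
        show u = P u + (u - P u)
        abel
      · rintro ⟨x, rfl⟩
        rw [hXapp, hFapp]
        have : (x : H) + (((e.symm x : G) : H) - P ((e.symm x : G) : H)) =
            ((e.symm x : G) : H) := by
          rw [hkey x]; abel
        rw [this]
        exact (e.symm x : G).2
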